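/- (Maximum at boundaries for the statistical parity smooth sensitivity) Let β > 0 and m > 0 be real numbers and let N1 ≥ 1 and N0 ≥ 2 be integers. Then the maximum over integers k ∈ {0, 1, …, N0 − 2} of e^{−kβ} · ( m/(N1 + k + 1) + m/(N0 − k) ) equals max( m/(N1 + 1) + m/N0 , e^{−(N0 − 2)β} · ( m/(N1 + N0 − 1) + m/2 ) ). -/

import Mathlib

open Set Real

lemma exp_comp_convexOn {s : Set ℝ} {h : ℝ → ℝ} (hh : ConvexOn ℝ s h) :
    ConvexOn ℝ s (fun x => Real.exp (h x)) := by
  refine ⟨hh.1, fun x hx y hy a b ha hb hab => ?_⟩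
  calc Real.exp (h (a•x+b•y)) ≤ Real.exp (a * h x + b * h y) :=
        Real.exp_le_exp.2 (by simpa using hh.2 hx hy ha hb hab)
    _ ≤ a * Real.exp (h x) + b * Real.exp (h y) := by
        simpa using convexOn_exp.2 (mem_univ (h x)) (mem_univ (h y)) ha hb hab

lemma affine_convexOn {s : Set ℝ} (hs : Convex ℝ s) (p q : ℝ) :
    ConvexOn ℝ s (fun x => p * x + q) := by
  refine ⟨hs, fun x hx y hy a b ha hb hab => ?_⟩
  simp only [smul_eq_mul]
  apply le_of_eq
  linear_combination (-q) * hab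

lemma neg_log_add_convexOn (c : ℝ) {s : Set ℝ} (hs : Convex ℝ s)
    (hpos : ∀ x ∈ s, 0 < c + x) :
    ConvexOn ℝ s (fun x => -Real.log (c + x)) := by
  have h1 := strictConcaveOn_log_Ioi.concaveOn.comp_affineMap
    (AffineMap.const ℝ ℝ c + AffineMap.id ℝ ℝ)
  have h2 := h1.neg
  have : ConvexOn ℝ ((AffineMap.const ℝ ℝ c + AffineMap.id ℝ ℝ) ⁻¹' (Ioi 0))
      (fun x => -Real.log (c + x)) := by
    have e : (fun x => -Real.log (c + x)) = -Real.log ∘ ⇑(AffineMap.const ℝ ℝ c + AffineMap.id ℝ ℝ) := by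
      funext x; simp
    rw [e]; exact h2
  exact this.subset (fun x hx => by simpa using hpos x hx) hs

lemma neg_log_sub_convexOn (c : ℝ) {s : Set ℝ} (hs : Convex ℝ s)
    (hpos : ∀ x ∈ s, 0 < c - x) :
    ConvexOn ℝ s (fun x => -Real.log (c - x)) := by
  have h1 := strictConcaveOn_log_Ioi.concaveOn.comp_affineMap
    (AffineMap.const ℝ ℝ c - AffineMap.id ℝ ℝ)
  have h2 := h1.neg
  have : ConvexOn ℝ ((AffineMap.const ℝ ℝ c - AffineMap.id ℝ ℝ) ⁻¹' (Ioi 0))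
      (fun x => -Real.log (c - x)) := by
    have e : (fun x => -Real.log (c - x)) = -Real.log ∘ ⇑(AffineMap.const ℝ ℝ c - AffineMap.id ℝ ℝ) := by
      funext x; simp
    rw [e]; exact h2
  exact this.subset (fun x hx => by simpa using hpos x hx) hs

/-- Maximum at boundaries for the statistical parity smooth
sensitivity: the maximum over integers `k ∈ {0, …, N0 - 2}` of
`e^{-kβ}·(m/(N1 + k + 1) + m/(N0 - k))` equals
`max( m/(N1+1) + m/N0 , e^{-(N0-2)β}·(m/(N1+N0-1) + m/2) )`. -/
theorem sp_smooth_sensitivity_max (β m : ℝ) (hβ : 0 < β) (hm : 0 < m)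
    (N1 N0 : ℕ) (hN1 : 1 ≤ N1) (hN0 : 2 ≤ N0) :
    (Finset.range (N0 - 1)).sup' (Finset.nonempty_range_iff.mpr (by omega))
      (fun k => Real.exp (-(k : ℝ) * β) * (m / ((N1 : ℝ) + k + 1) + m / ((N0 : ℝ) - k)))
    = max (m / ((N1 : ℝ) + 1) + m / (N0 : ℝ))
        (Real.exp (-((N0 : ℝ) - 2) * β) * (m / ((N1 : ℝ) + (N0 : ℝ) - 1) + m / 2)) := by
  have hN1' : (1:ℝ) ≤ (N1:ℝ) := by exact_mod_cast hN1
  have hN0' : (2:ℝ) ≤ (N0:ℝ) := by exact_mod_cast hN0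
  set t : ℝ := (N0:ℝ) - 2 with ht
  have ht0 : (0:ℝ) ≤ t := by simp [ht]; linarith
  have hS : Convex ℝ (Icc (0:ℝ) t) := convex_Icc _ _
  have hpos1 : ∀ x ∈ Icc (0:ℝ) t, 0 < ((N1:ℝ)+1) + x := fun x hx => by
    have := hx.1; linarith
  have hpos2 : ∀ x ∈ Icc (0:ℝ) t, 0 < (N0:ℝ) - x := fun x hx => by
    have := hx.2; simp [ht] at this; linarith
  set H1 : ℝ → ℝ := (fun x => -β * x + Real.log m) + (fun x => -Real.log (((N1:ℝ)+1) + x)) with hH1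
  set H2 : ℝ → ℝ := (fun x => -β * x + Real.log m) + (fun x => -Real.log ((N0:ℝ) - x)) with hH2
  have hc1 : ConvexOn ℝ (Icc (0:ℝ) t) H1 :=
    (affine_convexOn hS (-β) (Real.log m)).add (neg_log_add_convexOn _ hS hpos1)
  have hc2 : ConvexOn ℝ (Icc (0:ℝ) t) H2 :=
    (affine_convexOn hS (-β) (Real.log m)).add (neg_log_sub_convexOn _ hS hpos2)
  set G : ℝ → ℝ := fun x => Real.exp (H1 x) + Real.exp (H2 x) with hG
  have hGconv : ConvexOn ℝ (Icc (0:ℝ) t) G :=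
    (exp_comp_convexOn hc1).add (exp_comp_convexOn hc2)
  have hGF : ∀ y ∈ Icc (0:ℝ) t,
      G y = Real.exp (-y * β) * (m / ((N1:ℝ) + y + 1) + m / ((N0:ℝ) - y)) := by
    intro y hy
    have p1 := hpos1 y hy
    have p2 := hpos2 y hy
    simp only [hG, hH1, hH2, Pi.add_apply]
    rw [Real.exp_add, Real.exp_add, Real.exp_add, Real.exp_add,
      Real.exp_neg, Real.exp_neg, Real.exp_log hm, Real.exp_log p1, Real.exp_log p2]
    have e1 : (N1:ℝ) + y + 1 = ((N1:ℝ)+1) + y := by ring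
    rw [e1]
    field_simp
  -- key bound
  have key : ∀ k ∈ Finset.range (N0 - 1),
      Real.exp (-(k : ℝ) * β) * (m / ((N1 : ℝ) + k + 1) + m / ((N0 : ℝ) - k))
        ≤ max (G 0) (G t) := by
    intro k hk
    have hk' : k + 2 ≤ N0 := by
      have := Finset.mem_range.mp hk; omega
    have hk'' : ((k:ℝ)+2) ≤ (N0:ℝ) := by exact_mod_cast hk'
    have hmem : (k:ℝ) ∈ Icc (0:ℝ) t := ⟨Nat.cast_nonneg k, by simp [ht]; linarith⟩
    have hseg : (k:ℝ) ∈ segment ℝ (0:ℝ) t := by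
      rw [segment_eq_Icc ht0]; exact hmem
    have := hGconv.le_on_segment (left_mem_Icc.2 ht0) (right_mem_Icc.2 ht0) hseg
    rw [hGF (k:ℝ) hmem] at this
    exact this
  have hG0 : G 0 = m / ((N1 : ℝ) + 1) + m / (N0 : ℝ) := by
    rw [hGF 0 (left_mem_Icc.2 ht0)]
    norm_num
  have hGt : G t = Real.exp (-((N0 : ℝ) - 2) * β) * (m / ((N1 : ℝ) + (N0 : ℝ) - 1) + m / 2) := by
    rw [hGF t (right_mem_Icc.2 ht0)]
    have e1 : (N1:ℝ) + t + 1 = (N1:ℝ) + (N0:ℝ) - 1 := by simp [ht]; ring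
    have e2 : (N0:ℝ) - t = 2 := by simp [ht]
    rw [e1, e2, ht]
  refine le_antisymm (Finset.sup'_le _ _ (fun k hk => ?_)) (max_le ?_ ?_)
  · rw [← hG0, ← hGt]; exact key k hk
  · have h0 : (0:ℕ) ∈ Finset.range (N0 - 1) := Finset.mem_range.mpr (by omega)
    have := Finset.le_sup' (f := fun k : ℕ => Real.exp (-(k : ℝ) * β) * (m / ((N1 : ℝ) + k + 1) + m / ((N0 : ℝ) - k))) h0
    simp only [Nat.cast_zero] at this
    calc m / ((N1 : ℝ) + 1) + m / (N0 : ℝ)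
        = Real.exp (-(0:ℝ) * β) * (m / ((N1 : ℝ) + 0 + 1) + m / ((N0 : ℝ) - 0)) := by
          norm_num
      _ ≤ _ := this
  · have hT : N0 - 2 ∈ Finset.range (N0 - 1) := Finset.mem_range.mpr (by omega)
    have := Finset.le_sup' (f := fun k : ℕ => Real.exp (-(k : ℝ) * β) * (m / ((N1 : ℝ) + k + 1) + m / ((N0 : ℝ) - k))) hT
    have hcast : ((N0 - 2 : ℕ):ℝ) = (N0:ℝ) - 2 := by
      push_cast [hN0]; ring
    simp only [hcast] at this
    calc Real.exp (-((N0 : ℝ) - 2) * β) * (m / ((N1 : ℝ) + (N0 : ℝ) - 1) + m / 2)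
        = Real.exp (-((N0:ℝ)-2) * β) * (m / ((N1 : ℝ) + ((N0:ℝ)-2) + 1) + m / ((N0 : ℝ) - ((N0:ℝ)-2))) := by
          norm_num; ring_nf
      _ ≤ _ := this
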